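/- arXiv:0811.3159 — 6 statements merged into one kernel-verified Lean document; each statement's English description precedes it below -/
import Mathlib

section
/- Let (w_i, W_i)_{i=1}^m be a fusion frame for ℂ^n with dim W_i = d_i, Σ_i w_i² d_i = 1, M = Σ_i d_i ≥ n, and frame operator Σ_i w_i² P_{W_i} = (1/n)·I_n (i.e., a tight fusion frame). If for some index i one has Σ_{k≠i} d_k ≤ n − 1, then w_i² = 1/n and P_{W_i} P_{W_j} = 0 for every j ≠ i. -/
open Matrix

private lemma trace_idem_eq_finrank {n : ℕ} (P : Matrix (Fin n) (Fin n) ℂ)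
    (hPP : P * P = P) :
    P.trace = (Module.finrank ℂ (LinearMap.range P.mulVecLin) : ℂ) := by
  have hproj : LinearMap.IsProj (LinearMap.range P.mulVecLin) P.mulVecLin := by
    refine ⟨fun x => LinearMap.mem_range_self _ x, ?_⟩
    rintro x ⟨y, rfl⟩
    show (P.mulVecLin ∘ₗ P.mulVecLin) y = P.mulVecLin y
    rw [← Matrix.mulVecLin_mul, hPP]
  have h1 : LinearMap.trace ℂ (Fin n → ℂ) P.mulVecLin = Matrix.trace P := by
    rw [LinearMap.trace_eq_matrix_trace ℂ (Pi.basisFun ℂ (Fin n)),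
      LinearMap.toMatrix_eq_toMatrix', ← Matrix.toLin'_apply', LinearMap.toMatrix'_toLin']
  rw [← h1, hproj.trace]

private lemma ker_finrank_add {n : ℕ} (P : Matrix (Fin n) (Fin n) ℂ)
    (hPP : P * P = P) (d : ℕ) (htr : P.trace = (d : ℂ)) :
    Module.finrank ℂ (LinearMap.ker P.mulVecLin) + d = n := by
  have h1 := trace_idem_eq_finrank P hPP
  rw [htr] at h1
  have hd : d = Module.finrank ℂ (LinearMap.range P.mulVecLin) := by exact_mod_cast h1
  have h2 := LinearMap.finrank_range_add_finrank_ker P.mulVecLin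
  rw [Module.finrank_pi ℂ] at h2
  simp only [Fintype.card_fin] at h2
  omega

private lemma finrank_biInf_ker {N : ℕ} {ι : Type*} [DecidableEq ι]
    (U : ι → Submodule ℂ (Fin N → ℂ)) (s : Finset ι) :
    N ≤ Module.finrank ℂ ↥(⨅ k ∈ s, U k) + ∑ k ∈ s, (N - Module.finrank ℂ (U k)) := by
  classical
  induction s using Finset.induction_on with
  | empty =>
      have h0 : (⨅ k ∈ (∅ : Finset ι), U k) = ⊤ := by simp
      rw [Finset.sum_empty, h0, add_zero, finrank_top, Module.finrank_pi, Fintype.card_fin]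
  | @insert a s ha ih =>
      rw [Finset.sum_insert ha]
      have hins : (⨅ k ∈ insert a s, U k) = U a ⊓ ⨅ k ∈ s, U k := by
        simp [Finset.mem_insert, iInf_or, iInf_inf_eq]
      rw [hins]
      have hsup := Submodule.finrank_sup_add_finrank_inf_eq (U a) (⨅ k ∈ s, U k)
      have h1 : Module.finrank ℂ ↥(U a ⊔ ⨅ k ∈ s, U k) ≤ N := by
        have := Submodule.finrank_le (U a ⊔ ⨅ k ∈ s, U k)
        rwa [Module.finrank_pi, Fintype.card_fin] at this
      have h2 : Module.finrank ℂ ↥(U a) ≤ N := by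
        have := Submodule.finrank_le (U a)
        rwa [Module.finrank_pi, Fintype.card_fin] at this
      omega

/-- Dimensional restriction on tight fusion frames: if `(w i, W i)` is a tight
fusion frame for `ℂ^n` with `S = ∑ w i ^ 2 • P i = (1/n) • I`, `dim W i = d i`,
`∑ w i ^ 2 * d i = 1`, `∑ d i ≥ n`, and for some index `i₀` we have
`∑_{k ≠ i₀} d k ≤ n - 1`, then `w i₀ ^ 2 = 1/n` and `P i₀ * P j = 0` for all
`j ≠ i₀`. -/
theorem tight_fusion_frame_dimensional_restriction
    (n m : ℕ) (hn : 0 < n)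
    (w : Fin m → ℝ) (hw : ∀ i, 0 < w i)
    (d : Fin m → ℕ)
    (P : Fin m → Matrix (Fin n) (Fin n) ℂ)
    (hP : ∀ i, (P i).IsHermitian ∧ P i * P i = P i)
    (hd : ∀ i, (P i).trace = (d i : ℂ))
    (hnorm : ∑ i, (w i) ^ 2 * (d i : ℝ) = 1)
    (hM : n ≤ ∑ i, d i)
    (htight : ∑ i, ((w i : ℂ) ^ 2) • P i
        = (1 / (n : ℂ)) • (1 : Matrix (Fin n) (Fin n) ℂ))
    (i₀ : Fin m)
    (hi₀ : ∑ k ∈ Finset.univ.erase i₀, d k ≤ n - 1) :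
    (w i₀) ^ 2 = 1 / (n : ℝ) ∧ ∀ j, j ≠ i₀ → P i₀ * P j = 0 := by
  classical
  have hnC : (n : ℂ) ≠ 0 := Nat.cast_ne_zero.mpr hn.ne'
  set e : Finset (Fin m) := Finset.univ.erase i₀ with he
  -- dimension of each kernel
  have hker : ∀ k, Module.finrank ℂ (LinearMap.ker (P k).mulVecLin) + d k = n :=
    fun k => ker_finrank_add _ (hP k).2 _ (hd k)
  -- the intersection of the kernels over `e` is nontrivial
  have hbd := finrank_biInf_ker (fun k => LinearMap.ker (P k).mulVecLin) e
  have hsum : ∑ k ∈ e, (n - Module.finrank ℂ (LinearMap.ker (P k).mulVecLin))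
      = ∑ k ∈ e, d k := Finset.sum_congr rfl (fun k _ => by have := hker k; omega)
  rw [hsum] at hbd
  have hpos : 0 < Module.finrank ℂ
      ↥(⨅ k ∈ e, LinearMap.ker (P k).mulVecLin) := by omega
  have hne : (⨅ k ∈ e, LinearMap.ker (P k).mulVecLin) ≠ ⊥ := by
    intro hb
    rw [hb, finrank_bot] at hpos
    exact lt_irrefl 0 hpos
  obtain ⟨x, hxmem, hx0⟩ := Submodule.ne_bot_iff _ |>.mp hne
  have hxk : ∀ k, k ≠ i₀ → P k *ᵥ x = 0 := by
    intro k hk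
    simp only [Submodule.mem_iInf] at hxmem
    exact hxmem k (Finset.mem_erase.mpr ⟨hk, Finset.mem_univ k⟩)
  -- apply the tight frame identity to x
  have hx : ((w i₀ : ℂ) ^ 2) • (P i₀ *ᵥ x) = (1 / (n : ℂ)) • x := by
    have h := congrArg (fun M : Matrix (Fin n) (Fin n) ℂ => M *ᵥ x) htight
    have hL : (∑ i, ((w i : ℂ) ^ 2) • P i) *ᵥ x
        = ∑ i, ((w i : ℂ) ^ 2) • (P i *ᵥ x) := by
      have h2 : (∑ i, ((w i : ℂ) ^ 2) • P i) *ᵥ x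
          = ∑ i, (((w i : ℂ) ^ 2) • P i) *ᵥ x := map_sum (AddMonoidHom.mk'
          (fun M : Matrix (Fin n) (Fin n) ℂ => M *ᵥ x)
          (fun A B => Matrix.add_mulVec A B x)) _ _
      rw [h2]
      exact Finset.sum_congr rfl fun i _ => Matrix.smul_mulVec _ _ _
    rw [hL] at h
    rw [Finset.sum_eq_single_of_mem i₀ (Finset.mem_univ i₀)
        (fun k _ hk => by rw [hxk k hk, smul_zero])] at h
    rwa [Matrix.smul_mulVec, Matrix.one_mulVec] at h
  have hPx : P i₀ *ᵥ x ≠ 0 := by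
    intro h0
    rw [h0, smul_zero] at hx
    rcases smul_eq_zero.mp hx.symm with h | h
    · exact (one_div_ne_zero hnC) h
    · exact hx0 h
  -- apply P i₀ to both sides
  have hfix : ((w i₀ : ℂ) ^ 2) • (P i₀ *ᵥ x) = (1 / (n : ℂ)) • (P i₀ *ᵥ x) := by
    have h := congrArg (fun v => P i₀ *ᵥ v) hx
    simpa [Matrix.mulVec_smul, Matrix.mulVec_mulVec, (hP i₀).2] using h
  have hc : ((w i₀ : ℂ) ^ 2) = 1 / (n : ℂ) := by
    by_contra hne'
    have : (((w i₀ : ℂ) ^ 2) - 1 / (n : ℂ)) • (P i₀ *ᵥ x) = 0 := by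
      rw [sub_smul, hfix, sub_self]
    rcases smul_eq_zero.mp this with h | h
    · exact hne' (by linear_combination h)
    · exact hPx h
  have hw2 : (w i₀) ^ 2 = 1 / (n : ℝ) := by
    have h' : ((w i₀ ^ 2 : ℝ) : ℂ) = ((1 / n : ℝ) : ℂ) := by push_cast; exact hc
    exact_mod_cast h'
  refine ⟨hw2, ?_⟩
  -- second part
  have hsplit : ∑ k ∈ e, ((w k : ℂ) ^ 2) • P k
      = (1 / (n : ℂ)) • (1 : Matrix (Fin n) (Fin n) ℂ) - (1 / (n : ℂ)) • P i₀ := by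
    have h := htight
    rw [← Finset.add_sum_erase _ _ (Finset.mem_univ i₀), hc] at h
    rw [← he] at h
    linear_combination (norm := abel) h
  -- sandwich by P i₀
  have hzero : ∑ k ∈ e, ((w k : ℂ) ^ 2) • (P i₀ * P k * P i₀) = 0 := by
    have h := congrArg (fun M : Matrix (Fin n) (Fin n) ℂ => P i₀ * M * P i₀) hsplit
    simp only [Finset.mul_sum, Finset.sum_mul, Matrix.mul_smul, Matrix.smul_mul,
      mul_sub, sub_mul, Matrix.mul_one, (hP i₀).2] at h
    rw [h, sub_self]
  -- rewrite each summand as AᴴA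
  have hAA : ∀ k, k ≠ i₀ → P i₀ * P k * P i₀ = (P k * P i₀)ᴴ * (P k * P i₀) := by
    intro k hk
    rw [Matrix.conjTranspose_mul, (hP i₀).1.eq, (hP k).1.eq]
    rw [← Matrix.mul_assoc (P i₀ * P k) (P k) (P i₀),
      Matrix.mul_assoc (P i₀) (P k) (P k), (hP k).2]
  -- take traces
  have htr : ∑ k ∈ e, ((w k : ℂ) ^ 2) * ((P k * P i₀)ᴴ * (P k * P i₀)).trace = 0 := by
    have h := congrArg Matrix.trace hzero
    rw [Matrix.trace_sum, Matrix.trace_zero] at h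
    rw [← h]
    refine Finset.sum_congr rfl fun k hk => ?_
    rw [Matrix.trace_smul, ← hAA k (Finset.ne_of_mem_erase hk), smul_eq_mul]
  -- express traces as real sums of normSq
  have htrR : ∀ A : Matrix (Fin n) (Fin n) ℂ,
      (Aᴴ * A).trace = ((∑ i, ∑ l, Complex.normSq (A l i) : ℝ) : ℂ) := by
    intro A
    simp only [Matrix.trace, Matrix.diag, Matrix.mul_apply, Matrix.conjTranspose_apply,
      Complex.star_def]
    push_cast
    refine Finset.sum_congr rfl fun i _ => Finset.sum_congr rfl fun l _ => ?_
    rw [← Complex.normSq_eq_conj_mul_self]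
  have hreal : ∑ k ∈ e, (w k) ^ 2 * (∑ i, ∑ l, Complex.normSq ((P k * P i₀) l i)) = 0 := by
    have h := htr
    simp only [htrR] at h
    have : ((∑ k ∈ e, (w k) ^ 2 * (∑ i, ∑ l, Complex.normSq ((P k * P i₀) l i)) : ℝ) : ℂ)
        = 0 := by push_cast at h ⊢; exact h
    exact_mod_cast this
  intro j hj
  have hjmem : j ∈ e := Finset.mem_erase.mpr ⟨hj, Finset.mem_univ j⟩
  have hterm : (w j) ^ 2 * (∑ i, ∑ l, Complex.normSq ((P j * P i₀) l i)) = 0 := by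
    have hnn : ∀ k ∈ e, 0 ≤ (w k) ^ 2 * (∑ i, ∑ l, Complex.normSq ((P k * P i₀) l i)) := by
      intro k _
      apply mul_nonneg (sq_nonneg _)
      exact Finset.sum_nonneg fun i _ => Finset.sum_nonneg fun l _ => Complex.normSq_nonneg _
    exact (Finset.sum_eq_zero_iff_of_nonneg hnn).mp hreal j hjmem
  have hsumsq : (∑ i, ∑ l, Complex.normSq ((P j * P i₀) l i)) = 0 := by
    rcases mul_eq_zero.mp hterm with h | h
    · exact absurd h (pow_ne_zero 2 (hw j).ne')
    · exact h
  have hA0 : P j * P i₀ = 0 := by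
    ext l i
    have h1 : ∀ i ∈ (Finset.univ : Finset (Fin n)),
        (∑ l, Complex.normSq ((P j * P i₀) l i)) = 0 :=
      (Finset.sum_eq_zero_iff_of_nonneg (fun i _ =>
        Finset.sum_nonneg fun l _ => Complex.normSq_nonneg _)).mp hsumsq
    have h2 := (Finset.sum_eq_zero_iff_of_nonneg (fun l _ =>
        Complex.normSq_nonneg _)).mp (h1 i (Finset.mem_univ i)) l (Finset.mem_univ l)
    simpa using Complex.normSq_eq_zero.mp h2
  have : (P i₀ * P j)ᴴ = 0 := by
    rw [Matrix.conjTranspose_mul, (hP i₀).1.eq, (hP j).1.eq, hA0]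
  calc P i₀ * P j = ((P i₀ * P j)ᴴ)ᴴ := by rw [Matrix.conjTranspose_conjTranspose]
    _ = 0 := by rw [this, Matrix.conjTranspose_zero]
end

section
/- There is no tight fusion frame in ℂ³ consisting of two 2-dimensional subspaces: there do not exist subspaces W₁, W₂ ⊆ ℂ³ with dim W₁ = dim W₂ = 2 and weights w₁, w₂ > 0 such that w₁² P_{W₁} + w₂² P_{W₂} = (1/3)·I₃. -/
open Matrix

private lemma aux_weight (P Q : Matrix (Fin 3) (Fin 3) ℂ)
    (hP : P * P = P) (hQ : Q * Q = Q) (hQt : Q.trace = (2 : ℂ))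
    (w₁ w₂ : ℝ) (hw₁ : 0 < w₁)
    (heq : ((w₁ : ℂ) ^ 2) • P + ((w₂ : ℂ) ^ 2) • Q
        = (1 / 3 : ℂ) • (1 : Matrix (Fin 3) (Fin 3) ℂ)) :
    ((w₁ : ℂ) ^ 2) = 1 / 3 := by
  -- Q has determinant 0 or 1
  have hdet : Q.det * Q.det = Q.det := by rw [← det_mul, hQ]
  have hdet0 : Q.det = 0 := by
    rcases mul_eq_zero.mp (by ring_nf; linear_combination hdet : Q.det * (Q.det - 1) = 0) with h | h
    · exact h
    · exfalso
      have hQ1 : Q = 1 := by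
        have hinv : IsUnit Q.det := by
          rw [sub_eq_zero] at h; rw [h]; exact isUnit_one
        calc Q = Q * Q * Q⁻¹ := by rw [Matrix.mul_nonsing_inv_cancel_right _ _ hinv]
          _ = Q * Q⁻¹ := by rw [hQ]
          _ = 1 := Matrix.mul_nonsing_inv _ hinv
      rw [hQ1, Matrix.trace_one] at hQt
      norm_num at hQt
  obtain ⟨v, hv, hQv⟩ := (Matrix.exists_mulVec_eq_zero_iff).mpr hdet0
  have hw₁' : ((w₁ : ℂ) ^ 2) ≠ 0 := by
    simpa using pow_ne_zero 2 (Complex.ofReal_ne_zero.mpr hw₁.ne')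
  -- apply the equation to v
  have h1 : ((w₁ : ℂ) ^ 2) • P.mulVec v = (1 / 3 : ℂ) • v := by
    have := congrArg (fun M => Matrix.mulVec M v) heq
    simpa [Matrix.add_mulVec, Matrix.smul_mulVec, Matrix.one_mulVec, hQv] using this
  set c : ℂ := (1 / 3) / ((w₁ : ℂ) ^ 2) with hc
  have hPv : P.mulVec v = c • v := by
    have := congrArg (fun x => ((w₁ : ℂ) ^ 2)⁻¹ • x) h1
    simpa [smul_smul, inv_mul_cancel₀ hw₁', hc, div_eq_mul_inv, mul_comm] using this
  have hP2 : P.mulVec (P.mulVec v) = P.mulVec v := by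
    rw [Matrix.mulVec_mulVec, hP]
  rw [hPv, Matrix.mulVec_smul, hPv, smul_smul] at hP2
  have hcc : c * c = c := by
    have : (c * c - c) • v = 0 := by rw [sub_smul, hP2, sub_self]
    rcases smul_eq_zero.mp this with h | h
    · linear_combination h
    · exact absurd h hv
  have hcne : c ≠ 0 := by
    rw [hc]; exact div_ne_zero (by norm_num) hw₁'
  have hc1 : c = 1 := mul_right_cancel₀ hcne (by rw [hcc, one_mul])
  rw [hc, div_eq_one_iff_eq hw₁'] at hc1
  exact hc1.symm

/-- There is no tight fusion frame of `ℂ³` consisting of two 2-dimensional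
subspaces: there are no orthogonal projections `P₁, P₂` of rank (trace) `2` and
weights `w₁, w₂ > 0` with `w₁² P₁ + w₂² P₂ = (1/3) • I₃`. -/
theorem no_tight_fusion_frame_two_planes_in_C3 :
    ¬ ∃ (P₁ P₂ : Matrix (Fin 3) (Fin 3) ℂ) (w₁ w₂ : ℝ),
      P₁.IsHermitian ∧ P₁ * P₁ = P₁ ∧ P₁.trace = (2 : ℂ) ∧
      P₂.IsHermitian ∧ P₂ * P₂ = P₂ ∧ P₂.trace = (2 : ℂ) ∧
      0 < w₁ ∧ 0 < w₂ ∧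
      ((w₁ : ℂ) ^ 2) • P₁ + ((w₂ : ℂ) ^ 2) • P₂
        = (1 / 3 : ℂ) • (1 : Matrix (Fin 3) (Fin 3) ℂ) := by
  rintro ⟨P₁, P₂, w₁, w₂, _, hP₁, hP₁t, _, hP₂, hP₂t, hw₁, hw₂, heq⟩
  have h1 : ((w₁ : ℂ) ^ 2) = 1 / 3 := aux_weight P₁ P₂ hP₁ hP₂ hP₂t w₁ w₂ hw₁ heq
  have h2 : ((w₂ : ℂ) ^ 2) = 1 / 3 := by
    refine aux_weight P₂ P₁ hP₂ hP₁ hP₁t w₂ w₁ hw₂ ?_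
    rw [add_comm] at heq; exact heq
  have htr := congrArg Matrix.trace heq
  rw [Matrix.trace_add, Matrix.trace_smul, Matrix.trace_smul, Matrix.trace_smul,
    Matrix.trace_one, hP₁t, hP₂t, h1, h2] at htr
  simp only [smul_eq_mul] at htr
  norm_num at htr
end

section
/- Let (w_i, W_i)_{i=1}^m be a Bessel sequence of subspaces of ℂ^n with Σ_i w_i² dim(W_i) ≥ 1, S = Σ_i w_i² P_{W_i}, and P_q = Σ_{i,j} w_i² w_j² P_{W_j} P_{W_i} P_{W_j}. Then (1/n²)·I_n is submajorized by P_q, i.e., λ((1/n²)I_n) ≺_w λ(P_q). -/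
open Matrix

/-- `x` is submajorized by `y` (`x ≺_w y`). -/
def Submajorized {n : ℕ} (x y : Fin n → ℝ) : Prop :=
  ∀ s : Finset (Fin n), ∃ t : Finset (Fin n),
    t.card = s.card ∧ ∑ i ∈ s, x i ≤ ∑ i ∈ t, y i

/-- Trace of a Hermitian matrix equals the sum of its eigenvalues. -/
lemma my_trace_eq_sum_eig {k : ℕ} {A : Matrix (Fin k) (Fin k) ℂ} (hA : A.IsHermitian) :
    A.trace = ∑ i, (hA.eigenvalues i : ℂ) := by
  conv_lhs => rw [hA.spectral_theorem]
  rw [Unitary.conjStarAlgAut_apply, trace_mul_cycle]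
  rw [(Matrix.mem_unitaryGroup_iff').mp (hA.eigenvectorUnitary).2]
  simp [Matrix.trace_diagonal]

/-- One can pick `s.card` indices whose `f`-sum is at least the average times `s.card`. -/
lemma my_topk {n : ℕ} (f : Fin n → ℝ) (s : Finset (Fin n)) :
    ∃ t : Finset (Fin n), t.card = s.card ∧
      (s.card : ℝ) * ∑ i, f i ≤ (n : ℝ) * ∑ i ∈ t, f i := by
  have hk : s.card ≤ n := by
    simpa using Finset.card_le_card (Finset.subset_univ s)
  obtain ⟨t, ht, hmax⟩ := Finset.exists_max_image (Finset.univ.powersetCard s.card)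
      (fun u => ∑ i ∈ u, f i) (Finset.powersetCard_nonempty.2 (by simpa using hk))
  have htc : t.card = s.card := (Finset.mem_powersetCard.1 ht).2
  refine ⟨t, htc, ?_⟩
  have key : ∀ j ∉ t, (t.card : ℝ) * f j ≤ ∑ i ∈ t, f i := by
    intro j hj
    have h1 : ∀ i ∈ t, f j ≤ f i := by
      intro i hi
      have hcard : (insert j (t.erase i)).card = s.card := by
        rw [Finset.card_insert_of_notMem (fun h => hj (Finset.mem_of_mem_erase h)),
          Finset.card_erase_of_mem hi]
        have h1 : 0 < t.card := Finset.card_pos.2 ⟨i, hi⟩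
        omega
      have hmem : insert j (t.erase i) ∈ Finset.univ.powersetCard s.card :=
        Finset.mem_powersetCard.2 ⟨Finset.subset_univ _, hcard⟩
      have := hmax _ hmem
      rw [Finset.sum_insert (fun h => hj (Finset.mem_of_mem_erase h)),
        Finset.sum_erase_eq_sub hi] at this
      linarith
    calc (t.card : ℝ) * f j = ∑ _i ∈ t, f j := by
          rw [Finset.sum_const, nsmul_eq_mul]
      _ ≤ ∑ i ∈ t, f i := Finset.sum_le_sum h1
  have hsplit : ∑ i, f i = ∑ i ∈ t, f i + ∑ i ∈ tᶜ, f i :=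
    (Finset.sum_add_sum_compl t f).symm
  have h2 : (t.card : ℝ) * ∑ i ∈ tᶜ, f i ≤ (tᶜ.card : ℝ) * ∑ i ∈ t, f i := by
    rw [Finset.mul_sum]
    calc ∑ j ∈ tᶜ, (t.card : ℝ) * f j ≤ ∑ _j ∈ tᶜ, ∑ i ∈ t, f i :=
          Finset.sum_le_sum (fun j hj => key j (Finset.mem_compl.1 hj))
      _ = (tᶜ.card : ℝ) * ∑ i ∈ t, f i := by rw [Finset.sum_const, nsmul_eq_mul]
  have hcards : (t.card : ℝ) + (tᶜ.card : ℝ) = n := by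
    have := Finset.card_add_card_compl t
    rw [Fintype.card_fin] at this
    exact_mod_cast this
  rw [← htc, hsplit, ← hcards]
  nlinarith [h2]

/-- For a Bessel sequence of subspaces with `∑ w i ^ 2 * dim W i ≥ 1`, the
matrix `P_q = ∑_{i,j} w i² w j² P_j P_i P_j` submajorizes `(1/n²) • I`, i.e.
the constant vector `1/n²` is submajorized by the eigenvalue vector of `P_q`. -/
theorem scaled_identity_submajorized_by_q_potential
    (n m : ℕ) (hn : 0 < n)
    (w : Fin m → ℝ) (hw : ∀ i, 0 < w i)
    (d : Fin m → ℕ)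
    (P : Fin m → Matrix (Fin n) (Fin n) ℂ)
    (hP : ∀ i, (P i).IsHermitian ∧ P i * P i = P i)
    (hd : ∀ i, (P i).trace = (d i : ℂ))
    (htr : (1 : ℝ) ≤ ∑ i, (w i) ^ 2 * (d i : ℝ))
    (Pq : Matrix (Fin n) (Fin n) ℂ)
    (hPq : Pq = ∑ i, ∑ j, (((w i : ℂ) ^ 2) * ((w j : ℂ) ^ 2)) • (P j * P i * P j))
    (hq : Pq.IsHermitian) :
    Submajorized (fun _ => 1 / (n : ℝ) ^ 2) hq.eigenvalues := by
  classical
  set c : Fin m → ℂ := fun i => (w i : ℂ) ^ 2 with hc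
  set S : Matrix (Fin n) (Fin n) ℂ := ∑ i, c i • P i with hS
  -- S is Hermitian
  have hSh : S.IsHermitian := by
    unfold Matrix.IsHermitian
    rw [hS, conjTranspose_sum]
    refine Finset.sum_congr rfl fun i _ => ?_
    rw [conjTranspose_smul, (hP i).1.eq]
    congr 1
    simp [hc]
  -- trace Pq = trace (S * S)
  have htrPq : Pq.trace = (S * S).trace := by
    have hSS : S * S = ∑ i, ∑ j, (c i * c j) • (P i * P j) := by
      rw [hS, Finset.sum_mul_sum]
      refine Finset.sum_congr rfl fun i _ => Finset.sum_congr rfl fun j _ => ?_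
      rw [smul_mul_assoc, mul_smul_comm, smul_smul]
    rw [hPq, hSS, trace_sum, trace_sum]
    refine Finset.sum_congr rfl fun i _ => ?_
    rw [trace_sum, trace_sum]
    refine Finset.sum_congr rfl fun j _ => ?_
    rw [trace_smul, trace_smul]
    congr 1
    rw [trace_mul_cycle, (hP j).2, trace_mul_comm]
  -- trace (S*S) as sum of normSq
  have hdiag : ∀ a b, S a b = (starRingEnd ℂ) (S b a) := by
    intro a b
    have := congrFun (congrFun hSh a) b
    simpa [Matrix.conjTranspose_apply] using this.symm
  set r : ℝ := ∑ a, ∑ b, Complex.normSq (S a b) with hr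
  have htrSS : (S * S).trace = (r : ℝ) := by
    rw [trace]
    push_cast [hr]
    refine Finset.sum_congr rfl fun a _ => ?_
    rw [diag_apply, mul_apply]
    refine Finset.sum_congr rfl fun b _ => ?_
    rw [hdiag b a, Complex.mul_conj]
  -- trace S
  have htrS : S.trace = ((∑ i, (w i) ^ 2 * (d i : ℝ) : ℝ) : ℂ) := by
    rw [hS, trace_sum]
    push_cast
    refine Finset.sum_congr rfl fun i _ => ?_
    rw [trace_smul, hd i, smul_eq_mul, hc]
  -- diagonal of S real, and lower bound on r
  have hSdiag_re : ∀ a, Complex.normSq (S a a) = (S a a).re ^ 2 := by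
    intro a
    have h := hdiag a a
    have him : (S a a).im = 0 := by
      have := congrArg Complex.im h
      simp at this
      linarith
    rw [Complex.normSq_apply, him]
    ring
  have hreS : (∑ a, (S a a).re) = ∑ i, (w i) ^ 2 * (d i : ℝ) := by
    calc ∑ a, (S a a).re = (S.trace).re := by simp [trace, diag, Complex.re_sum]
      _ = _ := by rw [htrS, Complex.ofReal_re]
  have hr1 : 1 ≤ (n : ℝ) * r := by
    have hcs : (∑ a, (S a a).re) ^ 2 ≤ (n : ℝ) * ∑ a, (S a a).re ^ 2 := by
      have := sq_sum_le_card_mul_sum_sq (s := (Finset.univ : Finset (Fin n)))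
        (f := fun a => (S a a).re)
      simpa using this
    have hsq : (1 : ℝ) ≤ (∑ a, (S a a).re) ^ 2 := by
      rw [hreS]; nlinarith
    have hrge : ∑ a, (S a a).re ^ 2 ≤ r := by
      rw [hr]
      refine Finset.sum_le_sum fun a _ => ?_
      rw [← hSdiag_re a]
      exact Finset.single_le_sum (fun b _ => Complex.normSq_nonneg _) (Finset.mem_univ a)
    have hn1 : (1 : ℝ) ≤ n := by exact_mod_cast hn
    nlinarith [hcs, hsq, hrge, hn1]
  -- sum of eigenvalues = r
  have heig : ∑ i, hq.eigenvalues i = r := by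
    have h1 : Pq.trace = (r : ℂ) := by rw [htrPq, htrSS]
    have h2 := my_trace_eq_sum_eig hq
    rw [h1] at h2
    have : ((∑ i, hq.eigenvalues i : ℝ) : ℂ) = (r : ℂ) := by
      push_cast
      exact h2.symm
    exact_mod_cast this
  -- finish
  intro s
  obtain ⟨t, htc, hts⟩ := my_topk hq.eigenvalues s
  refine ⟨t, htc, ?_⟩
  rw [heig] at hts
  have hsum : ∑ _i ∈ s, (1 / (n : ℝ) ^ 2) = (s.card : ℝ) / (n : ℝ) ^ 2 := by
    rw [Finset.sum_const, nsmul_eq_mul]; ring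
  rw [hsum]
  have hnpos : (0 : ℝ) < n := by exact_mod_cast hn
  rw [div_le_iff₀ (by positivity)]
  nlinarith [hts, hr1, (Nat.cast_nonneg s.card : (0:ℝ) ≤ (s.card : ℝ)), hnpos]
end

section
/- Let P₁,...,P_m be orthogonal projections on ℂ^n, w ∈ ℝ_{>0}^m, and let Ψ : U(n)^m → {A ∈ M_n(ℂ) Hermitian : tr A = Σ_j w_j² tr P_j} be Ψ(U₁,...,U_m) = Σ_j w_j² U_j* P_j U_j. The differential of Ψ at (I_n,...,I_n), given by (X₁,...,X_m) ↦ Σ_j w_j² [X_j, P_j] on m-tuples of anti-Hermitian matrices, is surjective onto the trace-zero Hermitian matrices if and only if the commutant {P_j : j ∈ I_m}' equals ℂ·I_n. -/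
open Matrix

variable {n : ℕ}

noncomputable def Bform (n : ℕ) : LinearMap.BilinForm ℝ (Matrix (Fin n) (Fin n) ℂ) :=
  LinearMap.mk₂ ℝ (fun A C => ((Aᴴ * C).trace).re)
    (by intro A A' C; simp [conjTranspose_add, add_mul])
    (by intro r A C
        simp [conjTranspose_smul, Matrix.smul_mul, Complex.smul_re])
    (by intro A C C'; simp [mul_add])
    (by intro r A C; simp [Matrix.mul_smul, Complex.smul_re])

@[simp] lemma Bform_apply (A C : Matrix (Fin n) (Fin n) ℂ) :
    Bform n A C = ((Aᴴ * C).trace).re := rfl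

lemma Bform_self_eq (A : Matrix (Fin n) (Fin n) ℂ) :
    Bform n A A = ∑ j, ∑ i, Complex.normSq (A i j) := by
  simp only [Bform_apply, Matrix.trace, Matrix.diag, Matrix.mul_apply,
    conjTranspose_apply, Complex.re_sum]
  congr 1; ext j; congr 1; ext i
  simp [Complex.normSq_apply]

lemma Bform_self_zero {A : Matrix (Fin n) (Fin n) ℂ} (h : Bform n A A = 0) : A = 0 := by
  rw [Bform_self_eq] at h
  ext i j
  have h1 : ∀ j' ∈ Finset.univ, (0:ℝ) ≤ ∑ i, Complex.normSq (A i j') := fun _ _ =>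
    Finset.sum_nonneg fun _ _ => Complex.normSq_nonneg _
  have := (Finset.sum_eq_zero_iff_of_nonneg h1).mp h j (Finset.mem_univ j)
  have := (Finset.sum_eq_zero_iff_of_nonneg (fun _ _ => Complex.normSq_nonneg _)).mp this i
    (Finset.mem_univ i)
  simpa [Complex.normSq_eq_zero] using this

lemma Bform_comm (A C : Matrix (Fin n) (Fin n) ℂ) : Bform n A C = Bform n C A := by
  simp only [Bform_apply]
  have : (Cᴴ * A).trace = star ((Aᴴ * C).trace) := by
    rw [← trace_conjTranspose, conjTranspose_mul, conjTranspose_conjTranspose]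
  rw [this, Complex.star_def, Complex.conj_re]

lemma Bform_isRefl : (Bform n).IsRefl := fun A C h => by rw [Bform_comm]; exact h

lemma Bform_nondeg : (Bform n).Nondegenerate :=
  ⟨fun A h => Bform_self_zero (h A), fun A h => Bform_self_zero (h A)⟩

lemma Bform_restrict_nondeg (W : Submodule ℝ (Matrix (Fin n) (Fin n) ℂ)) :
    ((Bform n).restrict W).Nondegenerate := ⟨fun x h => by
  have := h x
  simp only [LinearMap.BilinForm.restrict_apply] at this
  exact Subtype.ext (Bform_self_zero this), fun x h => by
  have := h x
  simp only [LinearMap.BilinForm.restrict_apply] at this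
  exact Subtype.ext (Bform_self_zero this)⟩

lemma real_coe_smul (r : ℝ) (M : Matrix (Fin n) (Fin n) ℂ) :
    ((r : ℂ)) • M = r • M := by
  ext i k; simp [Complex.real_smul]

/-- The differential at the identity of
`Ψ(U₁,...,U_m) = ∑ j w j ^ 2 • U_j* P_j U_j`, namely
`(X₁,...,X_m) ↦ ∑ j w j ^ 2 • [X_j, P_j]` on `m`-tuples of anti-Hermitian
matrices, is surjective onto the trace-zero Hermitian matrices iff the
commutant of `{P_j}` is `ℂ · I`. -/
theorem differential_surjective_iff_commutant_trivial
    (n m : ℕ) (hn : 0 < n)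
    (w : Fin m → ℝ) (hw : ∀ j, 0 < w j)
    (P : Fin m → Matrix (Fin n) (Fin n) ℂ)
    (hP : ∀ j, (P j).IsHermitian ∧ P j * P j = P j) :
    (∀ Y : Matrix (Fin n) (Fin n) ℂ, Y.IsHermitian → Y.trace = 0 →
        ∃ X : Fin m → Matrix (Fin n) (Fin n) ℂ,
          (∀ j, (X j)ᴴ = -(X j)) ∧
          ∑ j, ((w j : ℂ) ^ 2) • (X j * P j - P j * X j) = Y) ↔
      {A : Matrix (Fin n) (Fin n) ℂ | ∀ j, A * P j = P j * A}
        = {A | ∃ c : ℂ, A = c • (1 : Matrix (Fin n) (Fin n) ℂ)} := by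
  classical
  have hPH : ∀ j, (P j)ᴴ = P j := fun j => (hP j).1
  have hnC : (n : ℂ) ≠ 0 := Nat.cast_ne_zero.mpr hn.ne'
  constructor
  · intro hsurj
    -- surjectivity implies trivial commutant
    have key : ∀ Y : Matrix (Fin n) (Fin n) ℂ, Yᴴ = Y → (∀ j, Y * P j = P j * Y) →
        ∃ c : ℂ, Y = c • 1 := by
      intro Y hYH hYc
      set c : ℂ := Y.trace / n with hc
      have hstar : star Y.trace = Y.trace := by
        rw [← trace_conjTranspose, hYH]
      have hcc : star c = c := by
        rw [hc, star_div₀, hstar]; norm_num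
      set Y₀ : Matrix (Fin n) (Fin n) ℂ := Y - c • 1 with hY₀
      have hY₀H : Y₀ᴴ = Y₀ := by
        rw [hY₀, conjTranspose_sub, hYH, conjTranspose_smul, hcc, conjTranspose_one]
      have htr₀ : Y₀.trace = 0 := by
        rw [hY₀, trace_sub, trace_smul, trace_one, hc]
        rw [Fintype.card_fin, smul_eq_mul, div_mul_cancel₀ _ hnC, sub_self]
      have hY₀c : ∀ j, Y₀ * P j = P j * Y₀ := by
        intro j
        rw [hY₀, sub_mul, mul_sub, hYc j, Matrix.smul_mul, Matrix.mul_smul, one_mul, mul_one]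
      obtain ⟨X, hXa, hXs⟩ := hsurj Y₀ hY₀H htr₀
      have h0 : (Y₀ᴴ * Y₀).trace = 0 := by
        rw [hY₀H]
        nth_rewrite 2 [← hXs]
        rw [Finset.mul_sum, trace_sum]
        refine Finset.sum_eq_zero fun j _ => ?_
        rw [mul_smul_comm, trace_smul, mul_sub, trace_sub]
        have h1 : (Y₀ * (P j * X j)).trace = (Y₀ * (X j * P j)).trace := by
          rw [← mul_assoc, hY₀c j, mul_assoc, trace_mul_comm, mul_assoc]
        rw [h1, sub_self, smul_zero]
      have : Y₀ = 0 := by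
        apply Bform_self_zero
        rw [Bform_apply, h0, Complex.zero_re]
      exact ⟨c, by rwa [hY₀, sub_eq_zero] at this⟩
    ext A
    simp only [Set.mem_setOf_eq]
    constructor
    · intro hA
      have hA' : ∀ j, Aᴴ * P j = P j * Aᴴ := by
        intro j
        have h := congrArg conjTranspose (hA j)
        rw [conjTranspose_mul, conjTranspose_mul, hPH] at h
        exact h.symm
      set H : Matrix (Fin n) (Fin n) ℂ := (2⁻¹ : ℂ) • (A + Aᴴ) with hH
      set K : Matrix (Fin n) (Fin n) ℂ := ((2 : ℂ)⁻¹ * -Complex.I) • (A - Aᴴ) with hK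
      have hHH : Hᴴ = H := by
        rw [hH, conjTranspose_smul, conjTranspose_add, conjTranspose_conjTranspose]
        rw [show star (2⁻¹ : ℂ) = 2⁻¹ by norm_num, add_comm]
      have hKH : Kᴴ = K := by
        rw [hK, conjTranspose_smul, conjTranspose_sub, conjTranspose_conjTranspose]
        rw [show star ((2 : ℂ)⁻¹ * -Complex.I) = -((2:ℂ)⁻¹ * -Complex.I) by
          simp [Complex.star_def]]
        rw [neg_smul, ← smul_neg, neg_sub]
      have hHc : ∀ j, H * P j = P j * H := by
        intro j
        rw [hH, Matrix.smul_mul, Matrix.mul_smul, add_mul, mul_add, hA j, hA' j]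
      have hKc : ∀ j, K * P j = P j * K := by
        intro j
        rw [hK, Matrix.smul_mul, Matrix.mul_smul, sub_mul, mul_sub, hA j, hA' j]
      obtain ⟨h, hh⟩ := key H hHH hHc
      obtain ⟨k, hk⟩ := key K hKH hKc
      refine ⟨h + Complex.I * k, ?_⟩
      have hAHK : A = H + Complex.I • K := by
        rw [hH, hK, smul_smul,
          show Complex.I * ((2:ℂ)⁻¹ * -Complex.I) = 2⁻¹ by
            rw [show Complex.I * ((2:ℂ)⁻¹ * -Complex.I) = (2:ℂ)⁻¹ * -(Complex.I * Complex.I) by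
              ring, Complex.I_mul_I]; ring]
        module
      rw [hAHK, hh, hk, smul_smul, ← add_smul]
    · rintro ⟨c, rfl⟩ j
      rw [Matrix.smul_mul, Matrix.mul_smul, one_mul, mul_one]
  · intro hcomm Y hYH hYtr
    let L : (Fin m → Matrix (Fin n) (Fin n) ℂ) →ₗ[ℝ] Matrix (Fin n) (Fin n) ℂ :=
      { toFun := fun X => ∑ j, ((w j : ℂ) ^ 2) • (X j * P j - P j * X j)
        map_add' := by
          intro X X'
          rw [← Finset.sum_add_distrib]
          refine Finset.sum_congr rfl fun j _ => ?_
          rw [Pi.add_apply, add_mul, mul_add, ← smul_add]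
          congr 1
          abel
        map_smul' := by
          intro r X
          show (∑ j, ((w j : ℂ) ^ 2) • ((r • X) j * P j - P j * (r • X) j)) = _
          rw [RingHom.id_apply, Finset.smul_sum]
          refine Finset.sum_congr rfl fun j _ => ?_
          rw [Pi.smul_apply, Matrix.smul_mul, Matrix.mul_smul, ← smul_sub, smul_comm] }
    let D : Submodule ℝ (Fin m → Matrix (Fin n) (Fin n) ℂ) :=
      { carrier := {X | ∀ j, (X j)ᴴ = -(X j)}
        add_mem' := by
          intro a b ha hb j
          rw [Pi.add_apply, conjTranspose_add, ha j, hb j, neg_add]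
        zero_mem' := by intro j; simp
        smul_mem' := by
          intro r X hX j
          rw [Pi.smul_apply, conjTranspose_smul, hX j, star_trivial, smul_neg] }
    set S : Submodule ℝ (Matrix (Fin n) (Fin n) ℂ) := D.map L with hS
    have hcompl := (Bform n).isCompl_orthogonal_of_restrict_nondegenerate
      (Bform_isRefl) (Bform_restrict_nondeg S)
    have hY : Y ∈ S ⊔ (Bform n).orthogonal S := by
      rw [hcompl.sup_eq_top]; trivial
    obtain ⟨s, hs, y, hy, hsy⟩ := Submodule.mem_sup.mp hY
    obtain ⟨Xs, hXsD, hLXs⟩ := hs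
    have horth : ∀ x ∈ S, Bform n x y = 0 := by
      intro x hx
      exact (LinearMap.BilinForm.mem_orthogonal_iff.mp hy) x hx
    -- s is Hermitian with trace zero
    have hsH : sᴴ = s := by
      rw [← hLXs]
      show (∑ j, ((w j : ℂ) ^ 2) • (Xs j * P j - P j * Xs j))ᴴ = _
      rw [conjTranspose_sum]
      refine Finset.sum_congr rfl fun j _ => ?_
      rw [conjTranspose_smul, conjTranspose_sub, conjTranspose_mul, conjTranspose_mul,
        hPH, hXsD j, show star ((w j : ℂ) ^ 2) = (w j : ℂ) ^ 2 by
          rw [star_pow, Complex.star_def, Complex.conj_ofReal]]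
      congr 1
      rw [Matrix.mul_neg, Matrix.neg_mul, sub_neg_eq_add, neg_add_eq_sub]
    have hstr : s.trace = 0 := by
      rw [← hLXs]
      show (∑ j, ((w j : ℂ) ^ 2) • (Xs j * P j - P j * Xs j)).trace = 0
      rw [trace_sum]
      refine Finset.sum_eq_zero fun j _ => ?_
      rw [trace_smul, trace_sub, trace_mul_comm, sub_self, smul_zero]
    have hyH : yᴴ = y := by
      have : y = Y - s := by rw [← hsy]; abel
      rw [this, conjTranspose_sub, hYH, hsH]
    -- y commutes with every P j
    have hyc : ∀ j, P j * y = y * P j := by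
      intro j
      set Z : Matrix (Fin n) (Fin n) ℂ := P j * y - y * P j with hZ
      have hZa : Zᴴ = -Z := by
        rw [hZ, conjTranspose_sub, conjTranspose_mul, conjTranspose_mul, hPH, hyH, neg_sub]
      have hX1D : (Pi.single j Z : Fin m → Matrix (Fin n) (Fin n) ℂ) ∈ D := by
        intro k
        by_cases hk : k = j
        · subst hk; rw [Pi.single_eq_same, hZa]
        · rw [Pi.single_eq_of_ne hk]; simp
      have hLX1 : L (Pi.single j Z) = ((w j : ℂ) ^ 2) • (Z * P j - P j * Z) := by
        show (∑ k, ((w k : ℂ) ^ 2) • ((Pi.single j Z : Fin m → _) k * P k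
          - P k * (Pi.single j Z : Fin m → _) k)) = _
        rw [Finset.sum_eq_single j]
        · rw [Pi.single_eq_same]
        · intro k _ hk
          rw [Pi.single_eq_of_ne hk]
          simp
        · intro hj; exact absurd (Finset.mem_univ j) hj
      have h1 : Bform n (L (Pi.single j Z)) y = 0 :=
        horth _ ⟨Pi.single j Z, hX1D, rfl⟩
      have h2 : Bform n (Z * P j - P j * Z) y = 0 := by
        rw [hLX1, show ((w j : ℂ) ^ 2) = (((w j ^ 2 : ℝ)) : ℂ) by push_cast; ring,
          real_coe_smul, _root_.map_smul, LinearMap.smul_apply] at h1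
        have hw2 : (w j) ^ 2 ≠ 0 := pow_ne_zero 2 (hw j).ne'
        exact (smul_eq_zero.mp h1).resolve_left hw2
      have hMH : (Z * P j - P j * Z)ᴴ = Z * P j - P j * Z := by
        rw [conjTranspose_sub, conjTranspose_mul, conjTranspose_mul, hPH, hZa]
        rw [Matrix.mul_neg, Matrix.neg_mul, sub_neg_eq_add, neg_add_eq_sub]
      have htrZ : ((Z * P j - P j * Z) * y).trace = (Z * Z).trace := by
        rw [sub_mul, trace_sub, mul_assoc, mul_assoc, trace_mul_comm (P j) (Z * y),
          mul_assoc, ← trace_sub, ← mul_sub, ← hZ]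
      have hZZ : Bform n Z Z = 0 := by
        have : Bform n (Z * P j - P j * Z) y = -(Bform n Z Z) := by
          rw [Bform_apply, Bform_apply, hMH, htrZ, hZa, Matrix.neg_mul, trace_neg,
            Complex.neg_re, neg_neg]
        rw [this] at h2
        linarith
      have : Z = 0 := Bform_self_zero hZZ
      rw [hZ, sub_eq_zero] at this
      exact this
    -- y is central, hence a multiple of the identity with zero trace, so zero
    have hymem : y ∈ {A : Matrix (Fin n) (Fin n) ℂ | ∀ j, A * P j = P j * A} := by
      intro j; exact (hyc j).symm
    rw [hcomm] at hymem
    obtain ⟨c, hyc'⟩ := hymem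
    have hytr : y.trace = 0 := by
      have : Y.trace = s.trace + y.trace := by rw [← hsy, trace_add]
      rw [hYtr, hstr, zero_add] at this
      exact this.symm
    have hc0 : c = 0 := by
      rw [hyc', trace_smul, trace_one, smul_eq_mul] at hytr
      simpa [Fintype.card_fin, hnC] using hytr
    have hy0 : y = 0 := by rw [hyc', hc0, zero_smul]
    refine ⟨Xs, hXsD, ?_⟩
    show L Xs = Y
    rw [hLXs, ← hsy, hy0, add_zero]
end

section
/- Let (w_i, W_i)_{i=1}^m be a Bessel sequence of subspaces of ℂ^n with frame operator S = Σ_i w_i² P_{W_i}, and suppose every spectral projection of S commutes with all P_{W_i}. Then for each eigenvalue μ of S, the subspaces M_{μ,i} = ker(S − μ I_n) ∩ W_i with weights w_i form a tight fusion frame for the eigenspace ker(S − μ I_n), with frame operator μ · P_{ker(S − μ I_n)}. -/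
noncomputable section

open scoped ComplexConjugate

/-- The orthogonal projection of `E` onto a subspace `K`, as an operator on `E`. -/
noncomputable def projCLM {E : Type*} [NormedAddCommGroup E]
    [InnerProductSpace ℂ E] (K : Submodule ℂ E) [K.HasOrthogonalProjection] :
    E →L[ℂ] E :=
  K.subtypeL.comp K.orthogonalProjectionOnto

open scoped InnerProductSpace

lemma projCLM_mem {E : Type*} [NormedAddCommGroup E] [InnerProductSpace ℂ E]
    (K : Submodule ℂ E) [K.HasOrthogonalProjection] (x : E) : projCLM K x ∈ K :=
  (K.orthogonalProjectionOnto x).2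

lemma projCLM_eq_self {E : Type*} [NormedAddCommGroup E] [InnerProductSpace ℂ E]
    (K : Submodule ℂ E) [K.HasOrthogonalProjection] {x : E} (hx : x ∈ K) :
    projCLM K x = x := by
  exact (Submodule.starProjection_eq_self_iff (K := K)).2 hx

lemma projCLM_symm {E : Type*} [NormedAddCommGroup E] [InnerProductSpace ℂ E]
    (K : Submodule ℂ E) [K.HasOrthogonalProjection] (x y : E) :
    ⟪projCLM K x, y⟫_ℂ = ⟪x, projCLM K y⟫_ℂ :=
  Submodule.inner_starProjection_left_eq_right K x y

lemma projCLM_inf_of_comm {E : Type*} [NormedAddCommGroup E] [InnerProductSpace ℂ E]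
    (K L : Submodule ℂ E) [K.HasOrthogonalProjection] [L.HasOrthogonalProjection]
    [(K ⊓ L).HasOrthogonalProjection]
    (h : projCLM K * projCLM L = projCLM L * projCLM K) :
    projCLM (K ⊓ L) = projCLM K * projCLM L := by
  ext x
  have hmem : projCLM K (projCLM L x) ∈ K ⊓ L := by
    refine ⟨projCLM_mem K _, ?_⟩
    have : (projCLM K * projCLM L) x = (projCLM L * projCLM K) x := by rw [h]
    simp only [ContinuousLinearMap.mul_apply] at this
    rw [this]; exact projCLM_mem L _
  have key : ∀ y ∈ K ⊓ L, ⟪x - projCLM K (projCLM L x), y⟫_ℂ = 0 := by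
    intro y hy
    rw [inner_sub_left, projCLM_symm, projCLM_eq_self K hy.1, projCLM_symm,
      projCLM_eq_self L hy.2, sub_self]
  have := Submodule.eq_starProjection_of_mem_of_inner_eq_zero (K := K ⊓ L)
    (u := x) hmem (fun y hy => key y hy)
  simp only [projCLM, Submodule.starProjection, ContinuousLinearMap.coe_comp', Function.comp_apply,
    Submodule.coe_subtypeL', ContinuousLinearMap.mul_apply] at *
  exact this

lemma sum_smul_proj_inf_eq {n m : ℕ}
    (w : Fin m → ℝ)
    (W : Fin m → Submodule ℂ (EuclideanSpace ℂ (Fin n)))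
    (S : EuclideanSpace ℂ (Fin n) →L[ℂ] EuclideanSpace ℂ (Fin n))
    (hS : S = ∑ i, ((w i : ℂ) ^ 2) • projCLM (W i))
    (E : Submodule ℂ (EuclideanSpace ℂ (Fin n))) (μ : ℂ)
    (hcomm' : ∀ i, projCLM E * projCLM (W i) = projCLM (W i) * projCLM E)
    (hSP : S * projCLM E = μ • projCLM E) :
    ∑ i, ((w i : ℂ) ^ 2) • projCLM (E ⊓ W i) = μ • projCLM E := by
  have hproj : ∀ i, projCLM (E ⊓ W i) = projCLM E * projCLM (W i) :=
    fun i => projCLM_inf_of_comm _ _ (hcomm' i)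
  calc ∑ i, ((w i : ℂ) ^ 2) • projCLM (E ⊓ W i)
      = ∑ i, ((w i : ℂ) ^ 2) • (projCLM (W i) * projCLM E) :=
        Finset.sum_congr rfl fun i _ => by rw [hproj i, hcomm' i]
    _ = (∑ i, ((w i : ℂ) ^ 2) • projCLM (W i)) * projCLM E := by
        rw [Finset.sum_mul]
        exact Finset.sum_congr rfl fun i _ => (smul_mul_assoc _ _ _).symm
    _ = μ • projCLM E := by rw [← hS, hSP]

/-- If every spectral projection of the fusion frame operator
`S = ∑ w i ^ 2 • P (W i)` commutes with every `P (W i)`, then for each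
eigenvalue `μ` of `S` the subspaces `ker (S - μ) ⊓ W i` with the weights `w i`
form a tight fusion frame for the eigenspace `ker (S - μ)`, with frame operator
`μ • P (ker (S - μ))`. -/
theorem tight_on_eigenspaces
    (n m : ℕ)
    (w : Fin m → ℝ) (hw : ∀ i, 0 < w i)
    (W : Fin m → Submodule ℂ (EuclideanSpace ℂ (Fin n)))
    (S : EuclideanSpace ℂ (Fin n) →L[ℂ] EuclideanSpace ℂ (Fin n))
    (hS : S = ∑ i, ((w i : ℂ) ^ 2) • projCLM (W i))
    (hcomm : ∀ (μ : ℝ) (i : Fin m),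
      projCLM (LinearMap.ker (S - (μ : ℂ) • ContinuousLinearMap.id ℂ _).toLinearMap) *
          projCLM (W i)
        = projCLM (W i) *
          projCLM (LinearMap.ker (S - (μ : ℂ) • ContinuousLinearMap.id ℂ _).toLinearMap))
    (μ : ℝ)
    (hμ : LinearMap.ker (S - (μ : ℂ) • ContinuousLinearMap.id ℂ _).toLinearMap ≠ ⊥) :
    ∑ i, ((w i : ℂ) ^ 2) •
        projCLM (LinearMap.ker (S - (μ : ℂ) • ContinuousLinearMap.id ℂ _).toLinearMap ⊓ W i)
      = (μ : ℂ) •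
        projCLM (LinearMap.ker (S - (μ : ℂ) • ContinuousLinearMap.id ℂ _).toLinearMap) := by
  refine sum_smul_proj_inf_eq w W S hS _ _ (hcomm μ) ?_
  ext1 x
  have hx0 := projCLM_mem (LinearMap.ker
      (S - (μ : ℂ) • ContinuousLinearMap.id ℂ (EuclideanSpace ℂ (Fin n))).toLinearMap) x
  rw [LinearMap.mem_ker] at hx0
  have hx : (S - (μ : ℂ) • ContinuousLinearMap.id ℂ (EuclideanSpace ℂ (Fin n)))
      (projCLM (LinearMap.ker
        (S - (μ : ℂ) • ContinuousLinearMap.id ℂ (EuclideanSpace ℂ (Fin n))).toLinearMap) x) = 0 := hx0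
  simp only [ContinuousLinearMap.sub_apply, ContinuousLinearMap.smul_apply,
    ContinuousLinearMap.id_apply, sub_eq_zero] at hx
  simpa using hx

end
end

section
/- Let D = diag(d₁,...,d_m) with all d_i > 0. Then the spectral Hadamard index I_sp(D) = min_{‖x‖=1} ‖D ∘ xx*‖_sp equals (Σ_i d_i^{-1})^{-1}, and the Frobenius Hadamard index I₂(D) = min_{‖x‖=1} ‖D ∘ xx*‖₂ equals (Σ_i d_i^{-2})^{-1/2}. -/
open Matrix

noncomputable section

/-- The Frobenius norm of a complex matrix. -/
noncomputable def frobNorm {m : ℕ} (M : Matrix (Fin m) (Fin m) ℂ) : ℝ :=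
  Real.sqrt (∑ i, ∑ j, ‖M i j‖ ^ 2)

/-- The spectral (operator) norm of a complex matrix, as the supremum of
`‖M x‖` over Euclidean unit vectors `x`. -/
noncomputable def specNorm {m : ℕ} (M : Matrix (Fin m) (Fin m) ℂ) : ℝ :=
  sSup {r : ℝ | ∃ x : Fin m → ℂ, ∑ i, ‖x i‖ ^ 2 = 1 ∧
    r = Real.sqrt (∑ i, ‖M.mulVec x i‖ ^ 2)}

lemma hadamard_diag_eq {m : ℕ} (d : Fin m → ℝ) (x : Fin m → ℂ) :
    (Matrix.diagonal fun i => (d i : ℂ)).hadamard (vecMulVec x (star x)) =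
      Matrix.diagonal fun i => ((d i * ‖x i‖ ^ 2 : ℝ) : ℂ) := by
  ext i j
  by_cases h : i = j
  · subst h
    simp [Matrix.hadamard, vecMulVec_apply, Complex.mul_conj, ← Complex.normSq_eq_norm_sq]
  · simp [Matrix.hadamard, vecMulVec, Matrix.diagonal, h]

lemma frobNorm_diag {m : ℕ} (t : Fin m → ℝ) (ht : ∀ i, 0 ≤ t i) :
    frobNorm (Matrix.diagonal fun i => (t i : ℂ)) = Real.sqrt (∑ i, t i ^ 2) := by
  unfold frobNorm
  congr 1
  refine Finset.sum_congr rfl fun i _ => ?_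
  rw [Finset.sum_eq_single i]
  · simp [Matrix.diagonal, abs_of_nonneg (ht i)]
  · intro j _ hj
    simp [Matrix.diagonal, (Ne.symm hj)]
  · simp

lemma specNorm_diag {m : ℕ} [Nonempty (Fin m)] (t : Fin m → ℝ) (ht : ∀ i, 0 ≤ t i)
    (hne : (Finset.univ : Finset (Fin m)).Nonempty) :
    specNorm (Matrix.diagonal fun i => (t i : ℂ)) = Finset.univ.sup' hne t := by
  set M := Finset.univ.sup' hne t with hM
  have hM0 : 0 ≤ M := by
    obtain ⟨i, _⟩ := hne
    exact le_trans (ht i) (Finset.le_sup' t (Finset.mem_univ i))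
  apply IsGreatest.csSup_eq
  constructor
  · obtain ⟨j, _, hj⟩ := Finset.exists_mem_eq_sup' hne t
    refine ⟨Pi.single j 1, ?_, ?_⟩
    · rw [Finset.sum_eq_single j] <;> simp +contextual [Pi.single_apply]
    · rw [Finset.sum_eq_single j]
      · simp only [Matrix.mulVec_diagonal, hM, hj, Pi.single_eq_same, mul_one,
          Complex.norm_real, Real.norm_eq_abs, sq_abs]
        exact (Real.sqrt_sq (ht j)).symm
      · intro i _ hi
        simp [Matrix.mulVec_diagonal, Pi.single_apply, hi]
      · simp
  · rintro r ⟨x, hx, rfl⟩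
    have h1 : ∀ i, ‖(Matrix.diagonal fun i => (t i : ℂ)).mulVec x i‖ ^ 2
        = t i ^ 2 * ‖x i‖ ^ 2 := by
      intro i
      simp [Matrix.mulVec_diagonal, mul_pow, abs_of_nonneg (ht i)]
    have h2 : ∑ i, ‖(Matrix.diagonal fun i => (t i : ℂ)).mulVec x i‖ ^ 2 ≤ M ^ 2 := by
      calc ∑ i, ‖(Matrix.diagonal fun i => (t i : ℂ)).mulVec x i‖ ^ 2
          = ∑ i, t i ^ 2 * ‖x i‖ ^ 2 := by simp_rw [h1]
        _ ≤ ∑ i, M ^ 2 * ‖x i‖ ^ 2 := by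
            refine Finset.sum_le_sum fun i _ => ?_
            have : t i ≤ M := Finset.le_sup' t (Finset.mem_univ i)
            exact mul_le_mul_of_nonneg_right (pow_le_pow_left₀ (ht i) this 2) (by positivity)
        _ = M ^ 2 := by rw [← Finset.mul_sum, hx, mul_one]
    calc Real.sqrt _ ≤ Real.sqrt (M ^ 2) := Real.sqrt_le_sqrt h2
      _ = M := Real.sqrt_sq hM0

/-- Hadamard indexes of a positive diagonal matrix `D = diag (d₁, …, d_m)`:
the spectral index `min_{‖x‖=1} ‖D ∘ x x*‖_sp` equals `(∑ dᵢ⁻¹)⁻¹` and the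
Frobenius index `min_{‖x‖=1} ‖D ∘ x x*‖₂` equals `(∑ dᵢ⁻²)^{-1/2}`. -/
theorem hadamard_index_diagonal
    (m : ℕ) (hm : 0 < m) (d : Fin m → ℝ) (hd : ∀ i, 0 < d i)
    (D : Matrix (Fin m) (Fin m) ℂ)
    (hD : D = Matrix.diagonal fun i => (d i : ℂ)) :
    IsLeast {r : ℝ | ∃ x : Fin m → ℂ, ∑ i, ‖x i‖ ^ 2 = 1 ∧
        r = specNorm (D.hadamard (vecMulVec x (star x)))}
      ((∑ i, (d i)⁻¹)⁻¹) ∧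
    IsLeast {r : ℝ | ∃ x : Fin m → ℂ, ∑ i, ‖x i‖ ^ 2 = 1 ∧
        r = frobNorm (D.hadamard (vecMulVec x (star x)))}
      ((Real.sqrt (∑ i, ((d i) ^ 2)⁻¹))⁻¹) := by
  haveI : Nonempty (Fin m) := Fin.pos_iff_nonempty.mp hm
  have hne : (Finset.univ : Finset (Fin m)).Nonempty := Finset.univ_nonempty
  subst hD
  have hspec : ∀ x : Fin m → ℂ,
      specNorm ((Matrix.diagonal fun i => (d i : ℂ)).hadamard (vecMulVec x (star x)))
        = Finset.univ.sup' hne (fun i => d i * ‖x i‖ ^ 2) := by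
    intro x
    rw [hadamard_diag_eq]
    exact specNorm_diag _ (fun i => mul_nonneg (hd i).le (sq_nonneg _)) hne
  have hfrob : ∀ x : Fin m → ℂ,
      frobNorm ((Matrix.diagonal fun i => (d i : ℂ)).hadamard (vecMulVec x (star x)))
        = Real.sqrt (∑ i, (d i * ‖x i‖ ^ 2) ^ 2) := by
    intro x
    rw [hadamard_diag_eq]
    exact frobNorm_diag _ (fun i => mul_nonneg (hd i).le (sq_nonneg _))
  constructor
  · -- spectral
    set S := ∑ i, (d i)⁻¹ with hSdef
    have hS : 0 < S := Finset.sum_pos (fun i _ => inv_pos.mpr (hd i)) hne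
    constructor
    · refine ⟨fun i => (Real.sqrt ((d i)⁻¹ / S) : ℂ), ?_, ?_⟩
      · have habs : ∀ i, ‖(Real.sqrt ((d i)⁻¹ / S) : ℂ)‖ ^ 2 = (d i)⁻¹ / S := by
          intro i
          rw [Complex.norm_real, Real.norm_eq_abs, sq_abs,
            Real.sq_sqrt (div_nonneg (inv_nonneg.mpr (hd i).le) hS.le)]
        simp_rw [habs, ← Finset.sum_div, ← hSdef, div_self (ne_of_gt hS)]
      · rw [hspec]
        have : ∀ i : Fin m, d i * ‖(Real.sqrt ((d i)⁻¹ / S) : ℂ)‖ ^ 2 = S⁻¹ := by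
          intro i
          rw [Complex.norm_real, Real.norm_eq_abs, sq_abs,
            Real.sq_sqrt (div_nonneg (inv_nonneg.mpr (hd i).le) hS.le)]
          field_simp
          exact div_self (hd i).ne'
        simp_rw [this]
        rw [Finset.sup'_const]
    · rintro r ⟨x, hx, rfl⟩
      rw [hspec]
      set M := Finset.univ.sup' hne (fun i => d i * ‖x i‖ ^ 2) with hMdef
      have hkey : 1 ≤ M * S := by
        calc (1 : ℝ) = ∑ i, ‖x i‖ ^ 2 := hx.symm
          _ ≤ ∑ i, M * (d i)⁻¹ := by
              refine Finset.sum_le_sum fun i _ => ?_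
              have h1 : d i * ‖x i‖ ^ 2 ≤ M :=
                Finset.le_sup' (fun i => d i * ‖x i‖ ^ 2) (Finset.mem_univ i)
              rw [mul_comm M, ← div_eq_inv_mul, le_div_iff₀ (hd i), mul_comm]
              exact h1
          _ = M * S := by rw [← Finset.mul_sum]
      rw [inv_eq_one_div]
      exact (div_le_iff₀ hS).mpr hkey
  · -- frobenius
    set T := ∑ i, ((d i) ^ 2)⁻¹ with hTdef
    have hT : 0 < T := Finset.sum_pos (fun i _ => inv_pos.mpr (pow_pos (hd i) 2)) hne
    constructor
    · refine ⟨fun i => (Real.sqrt (((d i) ^ 2)⁻¹ / T) : ℂ), ?_, ?_⟩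
      · have habs : ∀ i, ‖(Real.sqrt (((d i) ^ 2)⁻¹ / T) : ℂ)‖ ^ 2
            = ((d i) ^ 2)⁻¹ / T := by
          intro i
          rw [Complex.norm_real, Real.norm_eq_abs, sq_abs,
            Real.sq_sqrt (div_nonneg (inv_nonneg.mpr (pow_pos (hd i) 2).le) hT.le)]
        simp_rw [habs, ← Finset.sum_div, ← hTdef, div_self (ne_of_gt hT)]
      · rw [hfrob]
        have : ∀ i : Fin m, (d i * ‖(Real.sqrt (((d i) ^ 2)⁻¹ / T) : ℂ)‖ ^ 2) ^ 2
            = ((d i) ^ 2)⁻¹ * (T ^ 2)⁻¹ := by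
          intro i
          rw [Complex.norm_real, Real.norm_eq_abs, sq_abs,
            Real.sq_sqrt (div_nonneg (inv_nonneg.mpr (pow_pos (hd i) 2).le) hT.le)]
          have hdi := (hd i).ne'
          have hTne := hT.ne'
          field_simp
        simp_rw [this, ← Finset.sum_mul, ← hTdef]
        rw [show T * (T ^ 2)⁻¹ = T⁻¹ by field_simp, Real.sqrt_inv]
    · rintro r ⟨x, hx, rfl⟩
      rw [hfrob]
      set A := ∑ i, (d i * ‖x i‖ ^ 2) ^ 2 with hAdef
      have hCS : 1 ≤ A * T := by
        have h := Finset.sum_mul_sq_le_sq_mul_sq Finset.univ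
          (fun i => d i * ‖x i‖ ^ 2) (fun i => (d i)⁻¹)
        have hl : ∑ i, (d i * ‖x i‖ ^ 2) * (d i)⁻¹
            = ∑ i, ‖x i‖ ^ 2 := by
          refine Finset.sum_congr rfl fun i _ => ?_
          rw [mul_comm (d i), mul_assoc, mul_inv_cancel₀ (hd i).ne', mul_one]
        rw [hl, hx, one_pow] at h
        simp_rw [inv_pow] at h
        exact h
      have hA : T⁻¹ ≤ A := by
        rw [inv_eq_one_div]
        exact (div_le_iff₀ hT).mpr hCS
      calc (Real.sqrt T)⁻¹ = Real.sqrt T⁻¹ := (Real.sqrt_inv T).symm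
        _ ≤ Real.sqrt A := Real.sqrt_le_sqrt hA

end
end
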